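/- On ℝ⁴ with coordinates (t,x,y,z) and symplectic form ω = dt∧dy + dx∧dz, the second-order function I₂ = (x₁z₂ − z₁x₂ + y₂)/(t y₁ + x z₁ − z x₁ − y)³ on the 2-jet space of curves (x(t), y(t), z(t)) is invariant under the prolonged action of sp(4,ℝ), i.e., it is annihilated by the second prolongation of every Hamiltonian vector field X_H with H a quadratic polynomial in (t,x,y,z). -/

import Mathlib

open Matrix

noncomputable section

/-- Coordinates on `J²(ℝ⁴,1)`: `(t, x, y, z, x₁, y₁, z₁, x₂, y₂, z₂)`. -/
def I2 : (Fin 10 → ℝ) → ℝ := fun p =>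
  (p 4 * p 9 - p 6 * p 7 + p 8) / (p 0 * p 5 + p 1 * p 6 - p 3 * p 4 - p 2) ^ 3

/-- The second prolongation of the Hamiltonian vector field `X_H = ω⁻¹dH` of the
general quadratic Hamiltonian
`H = A t² + B x² + C y² + D z² + E tx + F ty + G tz + K xy + L xz + M yz`
with respect to `ω = dt∧dy + dx∧dz`, so that
`X_H = H_y ∂_t + H_z ∂_x − H_t ∂_y − H_x ∂_z`. -/
def XHprol (A B C D E F G K L M : ℝ) : (Fin 10 → ℝ) → (Fin 10 → ℝ) := fun p =>
  -- the linear coefficients of X_H, evaluated at the base point (t,x,y,z):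
  let t := p 0; let x := p 1; let y := p 2; let z := p 3
  let a := F * t + K * x + 2 * C * y + M * z        -- H_y
  let b := G * t + L * x + M * y + 2 * D * z        -- H_z
  let c := -(2 * A * t + E * x + F * y + G * z)     -- −H_t
  let e := -(E * t + 2 * B * x + K * y + L * z)     -- −H_x
  -- total derivatives of the (linear) coefficients:
  let Dta := F + p 4 * K + p 5 * (2 * C) + p 6 * M
  let Dtb := G + p 4 * L + p 5 * M + p 6 * (2 * D)
  let Dtc := -(2 * A) + p 4 * (-E) + p 5 * (-F) + p 6 * (-G)
  let Dte := -E + p 4 * (-(2 * B)) + p 5 * (-K) + p 6 * (-L)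
  let D2a := p 7 * K + p 8 * (2 * C) + p 9 * M
  let D2b := p 7 * L + p 8 * M + p 9 * (2 * D)
  let D2c := p 7 * (-E) + p 8 * (-F) + p 9 * (-G)
  let D2e := p 7 * (-(2 * B)) + p 8 * (-K) + p 9 * (-L)
  ![a, b, c, e,
    Dtb - Dta * p 4, Dtc - Dta * p 5, Dte - Dta * p 6,
    D2b - D2a * p 4 - 2 * Dta * p 7,
    D2c - D2a * p 5 - 2 * Dta * p 8,
    D2e - D2a * p 6 - 2 * Dta * p 9]

lemma aux_quot (n d nv dv : ℝ) (hd : d ≠ 0) (key : d * nv = 3 * n * dv) :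
    n * -((d * (d * d))⁻¹ * (d * (d * dv + d * dv) + d * d * dv) * (d * (d * d))⁻¹) +
      (d * (d * d))⁻¹ * nv = 0 := by
  field_simp
  linear_combination key

/-- `I₂` is annihilated by the second prolongation of every Hamiltonian vector
field of a quadratic Hamiltonian. -/
theorem stmt_10 : ∀ (A B C D E F G K L M : ℝ) (p : Fin 10 → ℝ),
    p 0 * p 5 + p 1 * p 6 - p 3 * p 4 - p 2 ≠ 0 →
    fderiv ℝ I2 p (XHprol A B C D E F G K L M p) = 0 := by
  intro A B C D E F G K L M p h
  have hI2eq : I2 = fun q : Fin 10 → ℝ => (q 4 * q 9 - q 6 * q 7 + q 8) *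
      ((q 0 * q 5 + q 1 * q 6 - (q 3 * q 4 + q 2)) *
       ((q 0 * q 5 + q 1 * q 6 - (q 3 * q 4 + q 2)) *
        (q 0 * q 5 + q 1 * q 6 - (q 3 * q 4 + q 2))))⁻¹ := by
    funext q; simp only [I2, div_eq_mul_inv]; ring_nf
  have hN := (((hasFDerivAt_apply (𝕜 := ℝ) 4 p).mul (hasFDerivAt_apply 9 p)).sub
      ((hasFDerivAt_apply 6 p).mul (hasFDerivAt_apply 7 p))).add (hasFDerivAt_apply 8 p)
  have hD := (((hasFDerivAt_apply (𝕜 := ℝ) 0 p).mul (hasFDerivAt_apply 5 p)).add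
      ((hasFDerivAt_apply 1 p).mul (hasFDerivAt_apply 6 p))).sub
      (((hasFDerivAt_apply 3 p).mul (hasFDerivAt_apply 4 p)).add (hasFDerivAt_apply 2 p))
  have hDDD := hD.mul (hD.mul hD)
  have h' : p 0 * p 5 + p 1 * p 6 - (p 3 * p 4 + p 2) ≠ 0 := by
    intro hc; apply h; linarith
  have hne : (p 0 * p 5 + p 1 * p 6 - (p 3 * p 4 + p 2)) *
      ((p 0 * p 5 + p 1 * p 6 - (p 3 * p 4 + p 2)) *
       (p 0 * p 5 + p 1 * p 6 - (p 3 * p 4 + p 2))) ≠ 0 :=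
    mul_ne_zero h' (mul_ne_zero h' h')
  have hInv := (hasFDerivAt_inv' (𝕜 := ℝ) hne).comp p hDDD
  have hI : HasFDerivAt I2 _ p := (hN.mul hInv).congr_of_eventuallyEq
    (Filter.Eventually.of_forall fun q => by rw [hI2eq]; rfl)
  set v := XHprol A B C D E F G K L M p with hv
  have e0 : v 0 = F * p 0 + K * p 1 + 2 * C * p 2 + M * p 3 := rfl
  have e1 : v 1 = G * p 0 + L * p 1 + M * p 2 + 2 * D * p 3 := rfl
  have e2 : v 2 = -(2 * A * p 0 + E * p 1 + F * p 2 + G * p 3) := rfl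
  have e3 : v 3 = -(E * p 0 + 2 * B * p 1 + K * p 2 + L * p 3) := rfl
  have e4 : v 4 = (G + p 4 * L + p 5 * M + p 6 * (2 * D)) -
      (F + p 4 * K + p 5 * (2 * C) + p 6 * M) * p 4 := rfl
  have e5 : v 5 = (-(2 * A) + p 4 * (-E) + p 5 * (-F) + p 6 * (-G)) -
      (F + p 4 * K + p 5 * (2 * C) + p 6 * M) * p 5 := rfl
  have e6 : v 6 = (-E + p 4 * (-(2 * B)) + p 5 * (-K) + p 6 * (-L)) -
      (F + p 4 * K + p 5 * (2 * C) + p 6 * M) * p 6 := rfl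
  have e7 : v 7 = (p 7 * L + p 8 * M + p 9 * (2 * D)) -
      (p 7 * K + p 8 * (2 * C) + p 9 * M) * p 4 -
      2 * (F + p 4 * K + p 5 * (2 * C) + p 6 * M) * p 7 := rfl
  have e8 : v 8 = (p 7 * (-E) + p 8 * (-F) + p 9 * (-G)) -
      (p 7 * K + p 8 * (2 * C) + p 9 * M) * p 5 -
      2 * (F + p 4 * K + p 5 * (2 * C) + p 6 * M) * p 8 := rfl
  have e9 : v 9 = (p 7 * (-(2 * B)) + p 8 * (-K) + p 9 * (-L)) -
      (p 7 * K + p 8 * (2 * C) + p 9 * M) * p 6 -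
      2 * (F + p 4 * K + p 5 * (2 * C) + p 6 * M) * p 9 := rfl
  have key : (p 0 * p 5 + p 1 * p 6 - (p 3 * p 4 + p 2)) *
      (p 4 * v 9 + p 9 * v 4 - (p 6 * v 7 + p 7 * v 6) + v 8) =
      3 * (p 4 * p 9 - p 6 * p 7 + p 8) *
      (p 0 * v 5 + p 5 * v 0 + (p 1 * v 6 + p 6 * v 1) - (p 3 * v 4 + p 4 * v 3 + v 2)) := by
    rw [e0, e1, e2, e3, e4, e5, e6, e7, e8, e9]; ring
  rw [hI.fderiv]
  simp only [ContinuousLinearMap.smul_apply, ContinuousLinearMap.sub_apply,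
    ContinuousLinearMap.add_apply, ContinuousLinearMap.coe_comp', Function.comp_apply,
    ContinuousLinearMap.neg_apply, ContinuousLinearMap.mulLeftRight_apply,
    ContinuousLinearMap.proj_apply, smul_eq_mul, Pi.smul_apply]
  exact aux_quot _ _ _ _ h' key
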